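/- For $g \ge 0$, the function $f(r_e) = r_e^2 e^g + \frac{2 r_e e^g}{2+\sqrt{4-e^{2g}}} + \frac{2 r_e e^{2g}\sqrt{r_e}}{(2+\sqrt{4-e^{2g}})^{3/2}} + \frac{r_e^2 e^{3g}}{(2+\sqrt{4-e^{2g}})^2} - 2 r_e e^{-g}$, viewed as a constraint $f(r_e) \ge 0$, determines a lower bound on $g$ that is a decreasing function of $r_e$ on $(0, 1/2]$; equivalently, for fixed $g$, if $f(1/2) < 0$ then $f(r_e) < 0$ for all $r_e \in (0, 1/2]$. -/

import Mathlib

open Real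

theorem five_bracelet_constraint_monotone_in_radius
    (g : ℝ) (hg : 0 ≤ g) (hg' : Real.exp (2 * g) ≤ 4)
    (f : ℝ → ℝ)
    (hf : ∀ r_e : ℝ, f r_e =
      r_e ^ 2 * Real.exp g +
        2 * r_e * Real.exp g / (2 + Real.sqrt (4 - Real.exp (2 * g))) +
        2 * r_e * Real.exp (2 * g) * Real.sqrt r_e /
          (2 + Real.sqrt (4 - Real.exp (2 * g))) ^ (3 / 2 : ℝ) +
        r_e ^ 2 * Real.exp (3 * g) / (2 + Real.sqrt (4 - Real.exp (2 * g))) ^ 2 -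
        2 * r_e * Real.exp (-g))
    (h : f (1 / 2) < 0) :
    ∀ r_e : ℝ, 0 < r_e → r_e ≤ 1 / 2 → f r_e < 0 := by
  set D : ℝ := 2 + Real.sqrt (4 - Real.exp (2 * g)) with hDdef
  have hD : 0 < D := by positivity
  have hD32 : 0 < D ^ (3 / 2 : ℝ) := Real.rpow_pos_of_pos hD _
  have hD2 : 0 < D ^ 2 := by positivity
  set φ : ℝ → ℝ := fun r =>
    r * Real.exp g + 2 * Real.exp g / D +
      2 * Real.exp (2 * g) * Real.sqrt r / D ^ (3 / 2 : ℝ) +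
      r * Real.exp (3 * g) / D ^ 2 - 2 * Real.exp (-g) with hφdef
  have hfφ : ∀ r : ℝ, f r = r * φ r := by
    intro r
    rw [hf, hφdef]
    field_simp
  have hφhalf : φ (1 / 2) < 0 := by
    have := h
    rw [hfφ] at this
    linarith
  intro r hr hr2
  have hsq : Real.sqrt r ≤ Real.sqrt (1 / 2) := Real.sqrt_le_sqrt hr2
  have hφle : φ r ≤ φ (1 / 2) := by
    rw [hφdef]
    simp only
    gcongr <;> positivity
  rw [hfφ]
  exact mul_neg_of_pos_of_neg hr (lt_of_le_of_lt hφle hφhalf)
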